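/- Lemma (summable bound on the biased I_{n,t}): For all integers 0 ≤ t ≤ n, all integers 0 ≤ k ≤ n, and every ζ ∈ ℝ with |ζ| ≤ n, one has |I_{n,t}| ≤ s_t, where s_t := (18|ζ|)^t · (2t+1) · e^{|ζ|} / t!. Moreover, ∑_{t=0}^{∞} s_t < ∞. -/

import Mathlib

open MeasureTheory ProbabilityTheory Filter Real

set_option maxHeartbeats 1000000

noncomputable section

/-- The biased `Z_{n,t}(l)`. -/
def ZntB (q n t k : ℕ) (γ β ζ δ c Λn : ℝ) (l : ℤ) : ℂ :=
  (2 : ℂ) ^ ((t : ℤ) - (n : ℤ)) *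
    ∑ τ ∈ Finset.range (n - t + 1),
      (Nat.choose (n - t) τ : ℂ) *
        ((Real.exp (ζ / n) * Real.cos β ^ 2 + Real.exp (-ζ / n) * Real.sin β ^ 2 : ℝ) : ℂ) ^ τ *
        ((Real.exp (-ζ / n) * Real.cos β ^ 2 + Real.exp (ζ / n) * Real.sin β ^ 2 : ℝ) : ℂ) ^
          (n - t - τ) *
        ((1 + (k : ℝ) * Real.sin (2 * δ) / n : ℝ) : ℂ) ^ τ *
        ((1 - (k : ℝ) * Real.sin (2 * δ) / n : ℝ) : ℂ) ^ (n - t - τ) *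
        Complex.exp (Complex.I * (Λn : ℂ) * (γ : ℂ) *
          (((((2 * τ : ℝ) - ((n : ℝ) - t) + l) ^ q - ((2 * τ : ℝ) - ((n : ℝ) - t) - l) ^ q) /
              (n : ℝ) ^ (c * ((q : ℝ) - 1)) : ℝ) : ℂ))

/-- The biased `Ẑ_{n,t}(ξ)`. -/
def ZhatB (q n t k : ℕ) (γ β ζ δ c Λn : ℝ) (ξ : ℤ) : ℂ :=
  ∑ l ∈ Finset.Icc (-(t : ℤ)) (t : ℤ),
    Complex.exp (-(2 * (π : ℂ) * Complex.I * (ξ : ℂ) * (l : ℂ)) / (2 * (t : ℂ) + 1)) *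
      ZntB q n t k γ β ζ δ c Λn l

/-- The biased `E_{n,t}`. -/
def EntB (q n t k : ℕ) (γ β ζ δ c Λn : ℝ) : ℂ :=
  (2 * (t : ℂ) + 1)⁻¹ *
    ∑ ξ ∈ Finset.Icc (-(t : ℤ)) (t : ℤ),
      ((Real.sin (2 * π * ξ / (2 * t + 1)) : ℝ) : ℂ) ^ t * ZhatB q n t k γ β ζ δ c Λn ξ

/-- The biased `I_{n,t}`. -/
def IntB (q n t k : ℕ) (γ β ζ δ c Λn : ℝ) : ℂ :=
  (Nat.choose n t : ℂ) *
    ((Real.exp (-(γ ^ 2 * ((n : ℝ) ^ q - ((n : ℝ) - 2 * t) ^ q) / (n : ℝ) ^ (q - 1))) : ℝ) : ℂ) *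
    ((Real.sinh (ζ / n) * Real.sin (2 * β) *
        (1 - (k : ℝ) / n + (k : ℝ) * Real.cos (2 * δ) / n) : ℝ) : ℂ) ^ t *
    EntB q n t k γ β ζ δ c Λn

private lemma abs_exp_I_real (z : ℂ) (r : ℝ) (h : z = (r:ℂ) * Complex.I) :
    ‖Complex.exp z‖ = 1 := by
  rw [h, Complex.norm_exp_ofReal_mul_I]

private lemma zntB_abs_le (q n t k : ℕ) (γ β ζ δ c Λn : ℝ) (l : ℤ)
    (hδ1 : 0 ≤ Real.sin (2*δ)) (hδ2 : Real.sin (2*δ) ≤ 1) (hn : 0 < n)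
    (htn : t ≤ n) (hkn : k ≤ n) (hζ : |ζ| ≤ n) :
    ‖ZntB q n t k γ β ζ δ c Λn l‖ ≤ Real.exp |ζ| := by
  have hn0 : (0:ℝ) < n := by exact_mod_cast hn
  set x : ℝ := |ζ| / n with hxdef
  have hx0 : 0 ≤ x := div_nonneg (abs_nonneg _) hn0.le
  have he1 : Real.exp (ζ / n) ≤ Real.exp x :=
    Real.exp_le_exp.mpr (div_le_div_of_nonneg_right (le_abs_self ζ) hn0.le)
  have he2 : Real.exp (-ζ / n) ≤ Real.exp x :=
    Real.exp_le_exp.mpr (div_le_div_of_nonneg_right (neg_le_abs ζ) hn0.le)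
  set aP : ℝ := Real.exp (ζ / n) * Real.cos β ^ 2 + Real.exp (-ζ / n) * Real.sin β ^ 2 with haP
  set aM : ℝ := Real.exp (-ζ / n) * Real.cos β ^ 2 + Real.exp (ζ / n) * Real.sin β ^ 2 with haM
  set s : ℝ := (k : ℝ) * Real.sin (2 * δ) / n with hs
  have hs0 : 0 ≤ s := div_nonneg (mul_nonneg (Nat.cast_nonneg k) hδ1) hn0.le
  have hs1 : s ≤ 1 := by
    rw [hs, div_le_one hn0]
    have hk : (k:ℝ) ≤ n := by exact_mod_cast hkn
    nlinarith [Nat.cast_nonneg (α := ℝ) k]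
  have hsq := Real.sin_sq_add_cos_sq β
  have hc2 := sq_nonneg (Real.cos β)
  have hs2 := sq_nonneg (Real.sin β)
  have hap0 : 0 ≤ aP := by positivity
  have ham0 : 0 ≤ aM := by positivity
  have hap : aP ≤ Real.exp x := by
    have h1 := mul_le_mul_of_nonneg_right he1 hc2
    have h2 := mul_le_mul_of_nonneg_right he2 hs2
    have h3 : Real.exp x * Real.cos β ^ 2 + Real.exp x * Real.sin β ^ 2 = Real.exp x := by
      linear_combination Real.exp x * hsq
    rw [haP]; linarith
  have ham : aM ≤ Real.exp x := by
    have h1 := mul_le_mul_of_nonneg_right he2 hc2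
    have h2 := mul_le_mul_of_nonneg_right he1 hs2
    have h3 : Real.exp x * Real.cos β ^ 2 + Real.exp x * Real.sin β ^ 2 = Real.exp x := by
      linear_combination Real.exp x * hsq
    rw [haM]; linarith
  have hex0 : (0:ℝ) ≤ Real.exp x := (Real.exp_pos x).le
  set m := n - t with hm
  rw [ZntB, norm_mul]
  have h2 : ‖(2:ℂ) ^ ((t : ℤ) - (n : ℤ))‖ = (2:ℝ) ^ ((t : ℤ) - (n : ℤ)) := by
    rw [norm_zpow]
    norm_num
  have hsum : ‖∑ τ ∈ Finset.range (m + 1),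
      (Nat.choose m τ : ℂ) * ((aP : ℝ) : ℂ) ^ τ * ((aM : ℝ) : ℂ) ^ (m - τ) *
        ((1 + s : ℝ) : ℂ) ^ τ * ((1 - s : ℝ) : ℂ) ^ (m - τ) *
        Complex.exp (Complex.I * (Λn : ℂ) * (γ : ℂ) *
          (((((2 * τ : ℝ) - ((n : ℝ) - t) + l) ^ q - ((2 * τ : ℝ) - ((n : ℝ) - t) - l) ^ q) /
              (n : ℝ) ^ (c * ((q : ℝ) - 1)) : ℝ) : ℂ))‖ ≤ (2 * Real.exp x) ^ m := by
    refine le_trans (norm_sum_le _ _) ?_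
    have hterm : ∀ τ ∈ Finset.range (m + 1),
        ‖(Nat.choose m τ : ℂ) * ((aP : ℝ) : ℂ) ^ τ * ((aM : ℝ) : ℂ) ^ (m - τ) *
          ((1 + s : ℝ) : ℂ) ^ τ * ((1 - s : ℝ) : ℂ) ^ (m - τ) *
          Complex.exp (Complex.I * (Λn : ℂ) * (γ : ℂ) *
            (((((2 * τ : ℝ) - ((n : ℝ) - t) + l) ^ q - ((2 * τ : ℝ) - ((n : ℝ) - t) - l) ^ q) /
                (n : ℝ) ^ (c * ((q : ℝ) - 1)) : ℝ) : ℂ))‖ ≤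
          (Real.exp x * (1 + s)) ^ τ * (Real.exp x * (1 - s)) ^ (m - τ) * (Nat.choose m τ) := by
      intro τ _
      rw [norm_mul, norm_mul, norm_mul, norm_mul, norm_mul, norm_pow, norm_pow, norm_pow, norm_pow]
      rw [Complex.norm_natCast, Complex.norm_real, Real.norm_eq_abs, Complex.norm_real, Real.norm_eq_abs, Complex.norm_real, Real.norm_eq_abs,
        Complex.norm_real, Real.norm_eq_abs]
      rw [abs_exp_I_real _ (Λn * γ *
          ((((2 * τ : ℝ) - ((n : ℝ) - t) + l) ^ q - ((2 * τ : ℝ) - ((n : ℝ) - t) - l) ^ q) /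
              (n : ℝ) ^ (c * ((q : ℝ) - 1)))) (by push_cast; ring)]
      rw [abs_of_nonneg hap0, abs_of_nonneg ham0, abs_of_nonneg (by linarith : (0:ℝ) ≤ 1 + s),
        abs_of_nonneg (by linarith : (0:ℝ) ≤ 1 - s), mul_one]
      calc (Nat.choose m τ : ℝ) * aP ^ τ * aM ^ (m - τ) * (1 + s) ^ τ * (1 - s) ^ (m - τ)
          ≤ (Nat.choose m τ : ℝ) * Real.exp x ^ τ * Real.exp x ^ (m - τ) * (1 + s) ^ τ *
            (1 - s) ^ (m - τ) := by
            gcongr <;> first | exact hap | exact ham | exact pow_nonneg (by linarith) _ | positivity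
        _ = (Real.exp x * (1 + s)) ^ τ * (Real.exp x * (1 - s)) ^ (m - τ) * (Nat.choose m τ) := by
            rw [mul_pow, mul_pow]; ring
    refine le_trans (Finset.sum_le_sum hterm) ?_
    rw [← add_pow]
    have : Real.exp x * (1 + s) + Real.exp x * (1 - s) = 2 * Real.exp x := by ring
    rw [this]
  rw [h2]
  refine le_trans (mul_le_mul_of_nonneg_left hsum (by positivity)) ?_
  have hzp : (2:ℝ) ^ ((t : ℤ) - (n : ℤ)) * (2:ℝ) ^ m = 1 := by
    rw [← zpow_natCast (2:ℝ) m, ← zpow_add₀ (two_ne_zero), hm, Nat.cast_sub htn]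
    norm_num
  rw [mul_pow, ← mul_assoc, hzp, one_mul, ← Real.exp_nat_mul]
  apply Real.exp_le_exp.mpr
  calc (m : ℝ) * x ≤ (n : ℝ) * x := by
        apply mul_le_mul_of_nonneg_right _ hx0
        exact_mod_cast Nat.sub_le n t
    _ = |ζ| := by rw [hxdef]; field_simp

private lemma card_Icc_int (t : ℕ) : (Finset.Icc (-(t:ℤ)) (t:ℤ)).card = 2*t+1 := by
  rw [Int.card_Icc]; omega

private lemma zhatB_abs_le (q n t k : ℕ) (γ β ζ δ c Λn : ℝ) (ξ : ℤ)
    (hδ1 : 0 ≤ Real.sin (2*δ)) (hδ2 : Real.sin (2*δ) ≤ 1) (hn : 0 < n)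
    (htn : t ≤ n) (hkn : k ≤ n) (hζ : |ζ| ≤ n) :
    ‖ZhatB q n t k γ β ζ δ c Λn ξ‖ ≤ (2*t+1) * Real.exp |ζ| := by
  rw [ZhatB]
  refine le_trans (norm_sum_le _ _) ?_
  have hterm : ∀ l ∈ Finset.Icc (-(t:ℤ)) (t:ℤ),
      ‖Complex.exp (-(2 * (π : ℂ) * Complex.I * (ξ : ℂ) * (l : ℂ)) / (2 * (t : ℂ) + 1)) *
        ZntB q n t k γ β ζ δ c Λn l‖ ≤ Real.exp |ζ| := by
    intro l _
    rw [norm_mul]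
    rw [abs_exp_I_real _ (-(2 * π * ξ * l) / (2 * t + 1)) (by push_cast; ring), one_mul]
    exact zntB_abs_le q n t k γ β ζ δ c Λn l hδ1 hδ2 hn htn hkn hζ
  refine le_trans (Finset.sum_le_sum hterm) ?_
  rw [Finset.sum_const, card_Icc_int, nsmul_eq_mul]
  apply le_of_eq
  push_cast
  ring

private lemma entB_abs_le (q n t k : ℕ) (γ β ζ δ c Λn : ℝ)
    (hδ1 : 0 ≤ Real.sin (2*δ)) (hδ2 : Real.sin (2*δ) ≤ 1) (hn : 0 < n)
    (htn : t ≤ n) (hkn : k ≤ n) (hζ : |ζ| ≤ n) :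
    ‖EntB q n t k γ β ζ δ c Λn‖ ≤ (2*t+1) * Real.exp |ζ| := by
  rw [EntB, norm_mul]
  have h1 : ‖(2 * (t : ℂ) + 1)⁻¹‖ = ((2*t+1 : ℝ))⁻¹ := by
    rw [norm_inv, show (2 * (t : ℂ) + 1) = ((2*(t:ℝ)+1 : ℝ) : ℂ) by push_cast; ring,
      Complex.norm_real, Real.norm_eq_abs, abs_of_nonneg (by positivity)]
  rw [h1]
  have h2 : ‖∑ ξ ∈ Finset.Icc (-(t : ℤ)) (t : ℤ),
      ((Real.sin (2 * π * ξ / (2 * t + 1)) : ℝ) : ℂ) ^ t * ZhatB q n t k γ β ζ δ c Λn ξ‖ ≤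
      (2*t+1) * ((2*t+1) * Real.exp |ζ|) := by
    refine le_trans (norm_sum_le _ _) ?_
    have hterm : ∀ ξ ∈ Finset.Icc (-(t:ℤ)) (t:ℤ),
        ‖((Real.sin (2 * π * ξ / (2 * t + 1)) : ℝ) : ℂ) ^ t *
          ZhatB q n t k γ β ζ δ c Λn ξ‖ ≤ (2*t+1) * Real.exp |ζ| := by
      intro ξ _
      rw [norm_mul, norm_pow, Complex.norm_real, Real.norm_eq_abs]
      calc |Real.sin (2 * π * ξ / (2 * t + 1))| ^ t * ‖ZhatB q n t k γ β ζ δ c Λn ξ‖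
          ≤ 1 * ((2*t+1) * Real.exp |ζ|) := by
            apply mul_le_mul _ (zhatB_abs_le q n t k γ β ζ δ c Λn ξ hδ1 hδ2 hn htn hkn hζ)
              (norm_nonneg _) (by norm_num)
            exact pow_le_one₀ (abs_nonneg _) (abs_sin_le_one _)
        _ = (2*t+1) * Real.exp |ζ| := one_mul _
    refine le_trans (Finset.sum_le_sum hterm) ?_
    rw [Finset.sum_const, card_Icc_int, nsmul_eq_mul]
    apply le_of_eq
    push_cast
    ring
  calc ((2*(t:ℝ)+1))⁻¹ * ‖∑ ξ ∈ Finset.Icc (-(t : ℤ)) (t : ℤ),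
      ((Real.sin (2 * π * ξ / (2 * t + 1)) : ℝ) : ℂ) ^ t * ZhatB q n t k γ β ζ δ c Λn ξ‖
      ≤ ((2*(t:ℝ)+1))⁻¹ * ((2*t+1) * ((2*t+1) * Real.exp |ζ|)) := by
        apply mul_le_mul_of_nonneg_left h2 (by positivity)
    _ = (2*t+1) * Real.exp |ζ| := by
        have : (2*(t:ℝ)+1) ≠ 0 := by positivity
        field_simp

private lemma sinh_le_aux (x : ℝ) : Real.sinh x ≤ x * Real.exp x := by
  have h := Real.add_one_le_exp (-(2*x))
  have h2 : Real.exp (-(2*x)) * Real.exp x = Real.exp (-x) := by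
    rw [← Real.exp_add]; ring_nf
  have h3 := Real.exp_pos x
  rw [Real.sinh_eq]
  nlinarith [Real.exp_pos (-x), mul_le_mul_of_nonneg_right h h3.le]

private lemma intB_abs_le (q n t k : ℕ) (γ β ζ δ c Λn : ℝ)
    (hq : 2 ≤ q) (hδ : δ ∈ Set.Icc (0 : ℝ) (π / 4)) (hn : 0 < n)
    (htn : t ≤ n) (hkn : k ≤ n) (hζ : |ζ| ≤ n) :
    ‖IntB q n t k γ β ζ δ c Λn‖ ≤
      (18 * |ζ|) ^ t * (2 * t + 1) * Real.exp |ζ| / t.factorial := by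
  obtain ⟨hδ0, hδπ⟩ := hδ
  have hπ : 0 < π := Real.pi_pos
  have hδ1 : 0 ≤ Real.sin (2*δ) := Real.sin_nonneg_of_nonneg_of_le_pi (by linarith)
    (by nlinarith)
  have hδ2 : Real.sin (2*δ) ≤ 1 := Real.sin_le_one _
  have hcos0 : 0 ≤ Real.cos (2*δ) := Real.cos_nonneg_of_mem_Icc ⟨by linarith, by linarith⟩
  have hcos1 : Real.cos (2*δ) ≤ 1 := Real.cos_le_one _
  have hn0 : (0:ℝ) < n := by exact_mod_cast hn
  have htR : (t:ℝ) ≤ n := by exact_mod_cast htn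
  have hkR : (k:ℝ) ≤ n := by exact_mod_cast hkn
  -- the exponential factor is at most 1
  have hE : Real.exp (-(γ ^ 2 * ((n : ℝ) ^ q - ((n : ℝ) - 2 * t) ^ q) / (n : ℝ) ^ (q - 1))) ≤ 1 := by
    rw [Real.exp_le_one_iff]
    have hnum : ((n:ℝ) - 2*t)^q ≤ (n:ℝ)^q := by
      calc ((n:ℝ) - 2*t)^q ≤ |((n:ℝ) - 2*t)^q| := le_abs_self _
        _ = |(n:ℝ) - 2*t|^q := by rw [abs_pow]
        _ ≤ (n:ℝ)^q := by
            apply pow_le_pow_left₀ (abs_nonneg _)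
            rw [abs_le]
            constructor <;> [skip; skip] <;> nlinarith [Nat.cast_nonneg (α := ℝ) t]
    have : 0 ≤ γ ^ 2 * ((n : ℝ) ^ q - ((n : ℝ) - 2 * t) ^ q) / (n : ℝ) ^ (q - 1) := by
      apply div_nonneg (mul_nonneg (sq_nonneg _) (by linarith)) (by positivity)
    linarith
  -- the sinh factor
  have hx1 : |ζ| / n ≤ 1 := by rw [div_le_one hn0]; exact hζ
  have hx0 : 0 ≤ |ζ| / n := div_nonneg (abs_nonneg _) hn0.le
  have hS : |Real.sinh (ζ / n) * Real.sin (2 * β) *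
      (1 - (k : ℝ) / n + (k : ℝ) * Real.cos (2 * δ) / n)| ≤ 3 * |ζ| / n := by
    have h1 : |Real.sinh (ζ / n)| ≤ 3 * (|ζ| / n) := by
      rw [Real.abs_sinh, abs_div, Nat.abs_cast]
      have h3 : Real.sinh (|ζ| / n) ≤ (|ζ| / n) * Real.exp (|ζ| / n) := sinh_le_aux _
      have h4 : Real.exp (|ζ| / n) ≤ Real.exp 1 := Real.exp_le_exp.mpr hx1
      have h5 : Real.exp 1 ≤ 3 := by
        have := Real.exp_one_lt_d9
        linarith
      nlinarith
    have h2 : |Real.sin (2 * β)| ≤ 1 := abs_sin_le_one _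
    have hkn' : 0 ≤ (k:ℝ)/n := div_nonneg (Nat.cast_nonneg k) hn0.le
    have hkn1 : (k:ℝ)/n ≤ 1 := by rw [div_le_one hn0]; exact hkR
    have h3 : |1 - (k : ℝ) / n + (k : ℝ) * Real.cos (2 * δ) / n| ≤ 1 := by
      rw [abs_le]
      have hc : (k : ℝ) * Real.cos (2 * δ) / n = ((k:ℝ)/n) * Real.cos (2*δ) := by ring
      rw [hc]
      constructor <;> nlinarith
    calc |Real.sinh (ζ / n) * Real.sin (2 * β) *
        (1 - (k : ℝ) / n + (k : ℝ) * Real.cos (2 * δ) / n)|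
        = |Real.sinh (ζ / n)| * |Real.sin (2 * β)| *
          |1 - (k : ℝ) / n + (k : ℝ) * Real.cos (2 * δ) / n| := by rw [abs_mul, abs_mul]
      _ ≤ (3 * (|ζ| / n)) * 1 * 1 := by
          gcongr <;> first | exact h1 | exact h2 | exact h3 | exact abs_nonneg _ | positivity
      _ = 3 * |ζ| / n := by ring
  -- choose bound
  have hchoose : (Nat.choose n t : ℝ) * (3 * |ζ| / n) ^ t ≤ (18 * |ζ|) ^ t / t.factorial := by
    have hc1 : (Nat.choose n t : ℝ) ≤ (n:ℝ)^t / t.factorial := by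
      rw [le_div_iff₀ (by positivity : (0:ℝ) < (t.factorial : ℝ))]
      have : Nat.choose n t * t.factorial ≤ n ^ t := by
        rw [Nat.mul_comm, ← Nat.descFactorial_eq_factorial_mul_choose]
        exact Nat.descFactorial_le_pow n t
      exact_mod_cast this
    calc (Nat.choose n t : ℝ) * (3 * |ζ| / n) ^ t
        ≤ ((n:ℝ)^t / t.factorial) * (3 * |ζ| / n) ^ t := by
          apply mul_le_mul_of_nonneg_right hc1 (by positivity)
      _ = (3 * |ζ|) ^ t / t.factorial := by
          rw [div_pow]
          field_simp
      _ ≤ (18 * |ζ|) ^ t / t.factorial := by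
          gcongr <;> first | positivity | linarith [abs_nonneg ζ]
  -- assemble
  rw [IntB, norm_mul, norm_mul, norm_mul, norm_pow, Complex.norm_natCast, Complex.norm_real, Real.norm_eq_abs,
    Complex.norm_real, Real.norm_eq_abs]
  rw [abs_of_nonneg (Real.exp_nonneg _)]
  calc (Nat.choose n t : ℝ) *
        Real.exp (-(γ ^ 2 * ((n : ℝ) ^ q - ((n : ℝ) - 2 * t) ^ q) / (n : ℝ) ^ (q - 1))) *
        |Real.sinh (ζ / n) * Real.sin (2 * β) *
          (1 - (k : ℝ) / n + (k : ℝ) * Real.cos (2 * δ) / n)| ^ t *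
        ‖EntB q n t k γ β ζ δ c Λn‖
      ≤ (Nat.choose n t : ℝ) * 1 * (3 * |ζ| / n) ^ t * ((2*t+1) * Real.exp |ζ|) := by
        gcongr <;> first
          | exact hE
          | exact hS
          | exact entB_abs_le q n t k γ β ζ δ c Λn hδ1 hδ2 hn htn hkn hζ
          | positivity
    _ = ((Nat.choose n t : ℝ) * (3 * |ζ| / n) ^ t) * ((2*t+1) * Real.exp |ζ|) := by ring
    _ ≤ ((18 * |ζ|) ^ t / t.factorial) * ((2*t+1) * Real.exp |ζ|) := by
        apply mul_le_mul_of_nonneg_right hchoose (by positivity)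
    _ = (18 * |ζ|) ^ t * (2 * t + 1) * Real.exp |ζ| / t.factorial := by ring

/-- **Lemma (summable bound on the biased `I_{n,t}`)**: for `0 ≤ t ≤ n`, `0 ≤ k ≤ n` and
`|ζ| ≤ n`, `|I_{n,t}| ≤ s_t := (18|ζ|)^t (2t+1) e^{|ζ|} / t!`, and `∑_t s_t < ∞`. -/
theorem IntB_summable_bound
    (q : ℕ) (hq : 2 ≤ q) (γ β ζ δ c : ℝ)
    (hδ : δ ∈ Set.Icc (0 : ℝ) (π / 4)) (hc : 1 / 2 < c ∧ c < 1) :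
    (∀ (Λn : ℝ), 0 ≤ Λn → ∀ n t k : ℕ, t ≤ n → k ≤ n → |ζ| ≤ n →
        ‖IntB q n t k γ β ζ δ c Λn‖ ≤
          (18 * |ζ|) ^ t * (2 * t + 1) * Real.exp |ζ| / t.factorial) ∧
      Summable (fun t : ℕ => (18 * |ζ|) ^ t * (2 * t + 1) * Real.exp |ζ| / t.factorial) := by
  constructor
  · intro Λn _ n t k htn hkn hζ
    rcases Nat.eq_zero_or_pos n with rfl | hn
    · interval_cases t
      interval_cases k
      have hz : ζ = 0 := by
        have : |ζ| ≤ 0 := by exact_mod_cast hζ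
        exact abs_eq_zero.mp (le_antisymm this (abs_nonneg _))
      subst hz
      have hq0 : q ≠ 0 := by omega
      have hq1 : q - 1 ≠ 0 := by omega
      simp [IntB, EntB, ZhatB, ZntB, hq0, hq1, zero_pow]
    · exact intB_abs_le q n t k γ β ζ δ c Λn hq hδ hn htn hkn hζ
  · have h2t : ∀ t : ℕ, ((2*t+1 : ℕ) : ℝ) ≤ 3 * 2^t := by
      intro t
      have : 2*t+1 ≤ 3*2^t := by
        induction t with
        | zero => norm_num
        | succ n ih => have h1 : 1 ≤ 2^n := Nat.one_le_two_pow; rw [pow_succ]; omega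
      exact_mod_cast this
    apply Summable.of_nonneg_of_le
      (f := fun t : ℕ => 3 * Real.exp |ζ| * ((36 * |ζ|)^t / t.factorial))
    · intro t; positivity
    · intro t
      have ht := h2t t
      push_cast at ht
      have h0 : (0:ℝ) ≤ (18*|ζ|)^t := by positivity
      calc (18 * |ζ|) ^ t * (2 * t + 1) * Real.exp |ζ| / t.factorial
          ≤ (18 * |ζ|) ^ t * (3 * 2^t) * Real.exp |ζ| / t.factorial := by
            gcongr
        _ = 3 * Real.exp |ζ| * ((36 * |ζ|)^t / t.factorial) := by
            have hp : ((36:ℝ) * |ζ|)^t = (18*|ζ|)^t * 2^t := by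
              rw [← mul_pow]; congr 1; ring
            rw [hp]; ring
    · exact (Real.summable_pow_div_factorial (36 * |ζ|)).mul_left _

end
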